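/- For the complex backward Euler–Maruyama scheme for one Schrödinger mode: u_{n+1} = (1 - iτλ)^{-1}(u_n - i ΔL_n), with λ ∈ ℝ, τ > 0, ΔL_n mean-zero with E[|ΔL_n|²] = τ v and independent of u_n, the expected mass satisfies M_{n+1} = (1 + τ²λ²)^{-1}(M_n + τ v); consequently for |λ| ≥ 1, M_n ≤ M_0 + v/τ for all n. -/

import Mathlib

open MeasureTheory ProbabilityTheory

theorem backward_EM_schrodinger_mass
    {Ω : Type*} [MeasureSpace Ω] [IsProbabilityMeasure (ℙ : Measure Ω)]
    (lam τ v : ℝ) (hτ : 0 < τ) (hv : 0 ≤ v)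
    (u ΔL : ℕ → Ω → ℂ)
    (hu : ∀ n, MemLp (u n) 2 ℙ) (hL : ∀ n, MemLp (ΔL n) 2 ℙ)
    (hLmean : ∀ n, ∫ ω, ΔL n ω = 0)
    (hLvar : ∀ n, ∫ ω, ‖ΔL n ω‖ ^ 2 = τ * v)
    (hindep : ∀ n, IndepFun (u n) (ΔL n) ℙ)
    (hrec : ∀ n ω, u (n + 1) ω = (1 - Complex.I * τ * lam)⁻¹ * (u n ω - Complex.I * ΔL n ω))
    (M : ℕ → ℝ)
    (hM : ∀ n, M n = ∫ ω, ‖u n ω‖ ^ 2) :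
    (∀ n, M (n + 1) = (1 + τ ^ 2 * lam ^ 2)⁻¹ * (M n + τ * v)) ∧
      (1 ≤ |lam| → ∀ n, M n ≤ M 0 + v / τ) := by
  -- integrability of squared norms
  have hInt2 : ∀ (f : Ω → ℂ), MemLp f 2 ℙ → Integrable (fun ω => ‖f ω‖ ^ 2) ℙ := by
    intro f hf
    have := hf.integrable_norm_rpow (by norm_num) (by norm_num)
    simpa [ENNReal.toReal_ofNat, Real.rpow_natCast] using this
  have key : ∀ n, M (n + 1) = (1 + τ ^ 2 * lam ^ 2)⁻¹ * (M n + τ * v) := by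
    intro n
    set c : ℂ := (1 - Complex.I * τ * lam)⁻¹ with hc
    have hcnorm : ‖c‖ ^ 2 = (1 + τ ^ 2 * lam ^ 2)⁻¹ := by
      rw [hc, norm_inv, inv_pow, Complex.sq_norm]
      congr 1
      simp [Complex.normSq_apply]
      ring
    -- abbreviations
    set a : Ω → ℂ := u n with ha
    set L : Ω → ℂ := fun ω => Complex.I * ΔL n ω with hLdef
    have hLm : MemLp L 2 ℙ := (hL n).const_mul Complex.I
    have hIa2 : Integrable (fun ω => ‖a ω‖ ^ 2) ℙ := hInt2 _ (hu n)
    have hIL2 : Integrable (fun ω => ‖L ω‖ ^ 2) ℙ := hInt2 _ hLm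
    have hIa : Integrable a ℙ := (hu n).integrable one_le_two
    have hIL : Integrable L ℙ := hLm.integrable one_le_two
    -- cross terms
    have hire : IndepFun (fun ω => (a ω).re) (fun ω => (L ω).re) ℙ :=
      (hindep n).comp Complex.measurable_re
        (Complex.measurable_re.comp (measurable_const_mul Complex.I))
    have hiim : IndepFun (fun ω => (a ω).im) (fun ω => (L ω).im) ℙ :=
      (hindep n).comp Complex.measurable_im
        (Complex.measurable_im.comp (measurable_const_mul Complex.I))
    have hImL : (∫ ω, L ω) = 0 := by
      rw [hLdef]
      rw [integral_const_mul]
      rw [hLmean n, mul_zero]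
    have hILre : Integrable (fun ω => (L ω).re) ℙ := hIL.re
    have hILim : Integrable (fun ω => (L ω).im) ℙ := hIL.im
    have hIare : Integrable (fun ω => (a ω).re) ℙ := hIa.re
    have hIaim : Integrable (fun ω => (a ω).im) ℙ := hIa.im
    have hLre0 : (∫ ω, (L ω).re) = 0 := by
      have := integral_re (𝕜 := ℂ) hIL
      simpa [hImL] using this
    have hLim0 : (∫ ω, (L ω).im) = 0 := by
      have := integral_im (𝕜 := ℂ) hIL
      simpa [hImL] using this
    have hcross1 : Integrable (fun ω => (a ω).re * (L ω).re) ℙ := by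
      exact hire.integrable_mul hIare hILre
    have hcross2 : Integrable (fun ω => (a ω).im * (L ω).im) ℙ := by
      exact hiim.integrable_mul hIaim hILim
    have hc1 : (∫ ω, (a ω).re * (L ω).re) = 0 := by
      rw [hire.integral_fun_mul_eq_mul_integral hIare.1 hILre.1, hLre0, mul_zero]
    have hc2 : (∫ ω, (a ω).im * (L ω).im) = 0 := by
      rw [hiim.integral_fun_mul_eq_mul_integral hIaim.1 hILim.1, hLim0, mul_zero]
    -- pointwise expansion
    have hpt : ∀ ω, ‖a ω - L ω‖ ^ 2
        = ‖a ω‖ ^ 2 + ‖L ω‖ ^ 2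
          - 2 * ((a ω).re * (L ω).re + (a ω).im * (L ω).im) := by
      intro ω
      have h1 : ∀ z : ℂ, ‖z‖ ^ 2 = Complex.normSq z := by
        intro z; rw [Complex.sq_norm]
      rw [h1, h1, h1, Complex.normSq_sub]
      simp [Complex.mul_re, Complex.conj_re, Complex.conj_im]
    have hIsum : Integrable (fun ω => ‖a ω‖ ^ 2 + ‖L ω‖ ^ 2
        - 2 * ((a ω).re * (L ω).re + (a ω).im * (L ω).im)) ℙ :=
      ((hIa2.add hIL2).sub ((hcross1.add hcross2).const_mul 2))
    have hmain : (∫ ω, ‖a ω - L ω‖ ^ 2) = M n + τ * v := by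
      calc (∫ ω, ‖a ω - L ω‖ ^ 2)
          = ∫ ω, (‖a ω‖ ^ 2 + ‖L ω‖ ^ 2
            - 2 * ((a ω).re * (L ω).re + (a ω).im * (L ω).im)) := by
            exact integral_congr_ae (Filter.Eventually.of_forall hpt)
        _ = (∫ ω, (‖a ω‖ ^ 2 + ‖L ω‖ ^ 2))
            - ∫ ω, 2 * ((a ω).re * (L ω).re + (a ω).im * (L ω).im) := by
            exact integral_sub (hIa2.add hIL2) ((hcross1.add hcross2).const_mul 2)
        _ = (∫ ω, ‖a ω‖ ^ 2) + (∫ ω, ‖L ω‖ ^ 2)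
            - 2 * ((∫ ω, (a ω).re * (L ω).re) + ∫ ω, (a ω).im * (L ω).im) := by
            rw [integral_add hIa2 hIL2, integral_const_mul,
              integral_add hcross1 hcross2]
        _ = M n + τ * v := by
            have hLnorm : (∫ ω, ‖L ω‖ ^ 2) = τ * v := by
              have : ∀ ω, ‖L ω‖ ^ 2 = ‖ΔL n ω‖ ^ 2 := by
                intro ω; rw [hLdef]; simp
              rw [integral_congr_ae (Filter.Eventually.of_forall this), hLvar n]
            rw [hc1, hc2, hLnorm, hM n]
            ring
    have hrw : ∀ ω, ‖u (n + 1) ω‖ ^ 2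
        = (1 + τ ^ 2 * lam ^ 2)⁻¹ * ‖a ω - L ω‖ ^ 2 := by
      intro ω
      rw [hrec n ω, norm_mul, mul_pow, hcnorm]
    rw [hM (n + 1), integral_congr_ae (Filter.Eventually.of_forall hrw),
      integral_const_mul, hmain]
  refine ⟨key, fun hlam n => ?_⟩
  have hM0 : ∀ m, 0 ≤ M m := by
    intro m; rw [hM m]
    exact integral_nonneg fun ω => by positivity
  have hden : (0:ℝ) < 1 + τ ^ 2 * lam ^ 2 := by positivity
  induction n with
  | zero =>
    have : 0 ≤ v / τ := div_nonneg hv hτ.le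
    linarith
  | succ n ih =>
    rw [key n]
    rw [inv_mul_le_iff₀ hden]
    have hlam2 : 1 ≤ lam ^ 2 := by nlinarith [sq_abs lam, abs_nonneg lam]
    have h1 : τ * v ≤ τ * lam ^ 2 * v := by nlinarith [mul_nonneg hτ.le hv]
    have h2 : 0 ≤ τ ^ 2 * lam ^ 2 * M 0 := mul_nonneg (by positivity) (hM0 0)
    have expand : (1 + τ ^ 2 * lam ^ 2) * (M 0 + v / τ)
        = M 0 + v / τ + τ ^ 2 * lam ^ 2 * M 0 + τ * lam ^ 2 * v := by
      field_simp
      ring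
    rw [expand]
    linarith [ih, h1, h2]
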